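/- Let ψ₀ ∈ ℂ² be a unit spinor and define φ(x) = (1+|x|²)^{-3/2}(𝟙 + i(σ·x))ψ₀ for x ∈ ℝ³. Then |φ(x)|²_{ℂ²} = (1+|x|²)^{-2}, and in particular φ ∈ L²(ℝ³, ℂ²). -/

import Mathlib

set_option maxHeartbeats 1000000

open Matrix

/-- The Pauli matrices σ₁, σ₂, σ₃ as 2×2 complex matrices. -/
noncomputable def pauli : Fin 3 → Matrix (Fin 2) (Fin 2) ℂ :=
  ![!![0, 1; 1, 0], !![0, -Complex.I; Complex.I, 0], !![1, 0; 0, -1]]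

/-- σ·z = ∑ⱼ zⱼσⱼ for a real vector z ∈ ℝ³. -/
noncomputable def sigmaDot (z : Fin 3 → ℝ) : Matrix (Fin 2) (Fin 2) ℂ :=
  ∑ j : Fin 3, (z j : ℂ) • pauli j

lemma key_alg (a b : ℂ) (x1 x2 x3 : ℝ) :
    Complex.normSq ((1 + Complex.I*x3)*a + (Complex.I*x1+x2)*b)
    + Complex.normSq ((Complex.I*x1-x2)*a + (1-Complex.I*x3)*b)
    = (1+(x1^2+x2^2+x3^2))*(Complex.normSq a + Complex.normSq b) := by
  obtain ⟨ar, ai⟩ := a; obtain ⟨br, bi⟩ := b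
  simp [Complex.normSq_apply, Complex.add_re, Complex.add_im, Complex.mul_re, Complex.mul_im]
  ring

/-- The Loss–Yau zero mode: for a unit spinor ψ₀ and
φ(x) = (1+|x|²)^{-3/2}(𝟙 + i σ·x)ψ₀ one has |φ(x)|² = (1+|x|²)^{-2};
in particular φ ∈ L²(ℝ³, ℂ²). -/
theorem loss_yau_zero_mode
    (ψ₀ : EuclideanSpace ℂ (Fin 2)) (hψ₀ : ‖ψ₀‖ = 1)
    (φ : EuclideanSpace ℝ (Fin 3) → EuclideanSpace ℂ (Fin 2))
    (hφ : ∀ x, φ x =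
      ((1 + ‖x‖ ^ 2) ^ (-(3 : ℝ) / 2) : ℝ) •
        (WithLp.equiv 2 (Fin 2 → ℂ)).symm
          (((1 : Matrix (Fin 2) (Fin 2) ℂ) + Complex.I • sigmaDot (fun j => x j)).mulVec
            (WithLp.equiv 2 (Fin 2 → ℂ) ψ₀))) :
    (∀ x, ‖φ x‖ ^ 2 = (1 + ‖x‖ ^ 2) ^ (-(2 : ℝ))) ∧
      MeasureTheory.MemLp φ 2 MeasureTheory.volume := by
  have hnorm : ∀ x : EuclideanSpace ℝ (Fin 3), ‖φ x‖ ^ 2 = (1 + ‖x‖ ^ 2) ^ (-(2 : ℝ)) := by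
    intro x
    have hx2 : ‖x‖ ^ 2 = x 0 ^ 2 + x 1 ^ 2 + x 2 ^ 2 := by
      rw [EuclideanSpace.norm_eq, Real.sq_sqrt (by positivity)]
      simp [Fin.sum_univ_three, sq_abs]
    have hpos : (0:ℝ) < 1 + ‖x‖ ^ 2 := by positivity
    have hψ : Complex.normSq (ψ₀ 0) + Complex.normSq (ψ₀ 1) = 1 := by
      have h := hψ₀
      rw [EuclideanSpace.norm_eq, Real.sqrt_eq_one, Fin.sum_univ_two] at h
      simpa [Complex.normSq_eq_norm_sq] using h
    -- norm of the mulVec part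
    set w := (((1 : Matrix (Fin 2) (Fin 2) ℂ) + Complex.I • sigmaDot (fun j => x j)).mulVec
            (WithLp.equiv 2 (Fin 2 → ℂ) ψ₀)) with hw
    have hw0 : w 0 = (1 + Complex.I * x 2)*(ψ₀ 0) + (Complex.I * x 0 + x 1)*(ψ₀ 1) := by
      simp [hw, Matrix.mulVec, dotProduct, Fin.sum_univ_two, sigmaDot, pauli,
        Fin.sum_univ_three, Matrix.one_apply, Matrix.add_apply, Matrix.smul_apply]
      first
      | ring1
      | (left; linear_combination (-(x 1 : ℂ)) * Complex.I_sq)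
      | (left; linear_combination ((x 1 : ℂ)) * Complex.I_sq)
      | linear_combination ((x 1 : ℂ)) * ψ₀ 0 * Complex.I_sq
      | linear_combination (-(x 1 : ℂ)) * ψ₀ 0 * Complex.I_sq
    have hw1 : w 1 = (Complex.I * x 0 - x 1)*(ψ₀ 0) + (1 - Complex.I * x 2)*(ψ₀ 1) := by
      simp [hw, Matrix.mulVec, dotProduct, Fin.sum_univ_two, sigmaDot, pauli,
        Fin.sum_univ_three, Matrix.one_apply, Matrix.add_apply, Matrix.smul_apply]
      first
      | ring1
      | (left; linear_combination (-(x 1 : ℂ)) * Complex.I_sq)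
      | (left; linear_combination ((x 1 : ℂ)) * Complex.I_sq)
      | linear_combination ((x 1 : ℂ)) * ψ₀ 0 * Complex.I_sq
      | linear_combination (-(x 1 : ℂ)) * ψ₀ 0 * Complex.I_sq
    have hwnorm : ‖(WithLp.equiv 2 (Fin 2 → ℂ)).symm w‖ ^ 2 = 1 + ‖x‖ ^ 2 := by
      rw [EuclideanSpace.norm_eq, Real.sq_sqrt (by positivity)]
      have : ∀ i : Fin 2, ‖((WithLp.equiv 2 (Fin 2 → ℂ)).symm w) i‖ ^ 2
          = Complex.normSq (w i) := by
        intro i; simp [Complex.normSq_eq_norm_sq]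
      rw [Fin.sum_univ_two, this 0, this 1, hw0, hw1, key_alg, hψ, hx2]
      ring
    rw [hφ x, norm_smul, mul_pow, hwnorm, Real.norm_eq_abs,
      abs_of_pos (Real.rpow_pos_of_pos hpos _), ← Real.rpow_natCast _ 2,
      ← Real.rpow_mul hpos.le]
    rw [← Real.rpow_add_one (ne_of_gt hpos)]
    norm_num
  refine ⟨hnorm, ?_⟩
  have hcont : Continuous φ := by
    have : φ = fun x => ((1 + ‖x‖ ^ 2) ^ (-(3 : ℝ) / 2) : ℝ) •
        (WithLp.equiv 2 (Fin 2 → ℂ)).symm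
          (((1 : Matrix (Fin 2) (Fin 2) ℂ) + Complex.I • sigmaDot (fun j => x j)).mulVec
            (WithLp.equiv 2 (Fin 2 → ℂ) ψ₀)) := funext hφ
    rw [this]
    apply Continuous.fun_smul
    · apply Continuous.rpow_const (by fun_prop)
      intro x; left; positivity
    · refine Continuous.comp (PiLp.continuous_toLp 2 _) ?_
      refine continuous_pi fun i => ?_
      simp only [Matrix.mulVec, dotProduct, Fin.sum_univ_two, sigmaDot,
        Fin.sum_univ_three, Matrix.add_apply, Matrix.smul_apply, Matrix.one_apply,
        smul_eq_mul, pauli]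
      have hx : ∀ j : Fin 3, Continuous (fun x : EuclideanSpace ℝ (Fin 3) => ((x j : ℝ) : ℂ)) :=
        fun j => Complex.continuous_ofReal.comp (EuclideanSpace.proj j).continuous
      fun_prop
  rw [MeasureTheory.memLp_two_iff_integrable_sq_norm hcont.aestronglyMeasurable]
  have : (fun x => ‖φ x‖ ^ 2) = fun x : EuclideanSpace ℝ (Fin 3) => ((1:ℝ) + ‖x‖ ^ 2) ^ ((-4:ℝ)/2) := by
    funext x; rw [hnorm x]; norm_num
  rw [this]
  exact integrable_rpow_neg_one_add_norm_sq (by simp; norm_num)
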